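/- Let (I ×_f X, D, ≤, ≪, τ) be a Lorentzian warped product with I ⊆ ℝ an open interval and (X,d) a proper geodesic length space. Then W^N = V^N, where both measures are taken with respect to the product metric D. -/

import Mathlib

open Set MeasureTheory
open scoped ENNReal NNReal

noncomputable section

/-- A Lorentzian pre-length space structure on a metric space `X`. -/
structure LPLS (X : Type*) [MetricSpace X] : Type _ where
  causal : X → X → Prop
  chron : X → X → Prop
  tau : X → X → ℝ≥0∞
  causal_refl : ∀ x, causal x x
  causal_trans : ∀ x y z, causal x y → causal y z → causal x z
  chron_trans : ∀ x y z, chron x y → chron y z → chron x z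
  chron_causal : ∀ x y, chron x y → causal x y
  tau_lsc : LowerSemicontinuous fun p : X × X => tau p.1 p.2
  tau_rev_triangle : ∀ x y z, causal x y → causal y z → tau x y + tau y z ≤ tau x z
  tau_eq_zero : ∀ x y, ¬ causal x y → tau x y = 0
  tau_pos_iff : ∀ x y, 0 < tau x y ↔ chron x y

variable {Y : Type*}

/-- The causal diamond `J(a,b)`. -/
def cdiam (causal : Y → Y → Prop) (a b : Y) : Set Y := {z | causal a z ∧ causal z b}

/-- The set associated to a possibly-empty element of `𝒥`. -/
def optDiamond (causal : Y → Y → Prop) : Option (Y × Y) → Set Y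
  | none => ∅
  | some ab => cdiam causal ab.1 ab.2

/-- The weight `ρ_N`. -/
def optWeight (tau : Y → Y → ℝ≥0∞) (ω N : ℝ) : Option (Y × Y) → ℝ≥0∞
  | none => 0
  | some ab => ENNReal.ofReal ω * tau ab.1 ab.2 ^ N

/-- Diameter with respect to a (pseudo-)edistance `e`. -/
def ediamWith (e : Y → Y → ℝ≥0∞) (S : Set Y) : ℝ≥0∞ := ⨆ p ∈ S, ⨆ q ∈ S, e p q

/-- `V^N_δ`. -/
def Vdelta (e : Y → Y → ℝ≥0∞) (causal : Y → Y → Prop) (tau : Y → Y → ℝ≥0∞)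
    (ω N : ℝ) (δ : ℝ≥0∞) (A : Set Y) : ℝ≥0∞ :=
  ⨅ (c : ℕ → Option (Y × Y)) (_ : ∀ i, ∀ ab ∈ c i, causal ab.1 ab.2)
    (_ : ∀ i, ediamWith e (optDiamond causal (c i)) < δ)
    (_ : A ⊆ ⋃ i, optDiamond causal (c i)),
    ∑' i, optWeight tau ω N (c i)

/-- `V^N`. -/
def Vmeas (e : Y → Y → ℝ≥0∞) (causal : Y → Y → Prop) (tau : Y → Y → ℝ≥0∞)
    (ω N : ℝ) (A : Set Y) : ℝ≥0∞ :=
  ⨆ (δ : ℝ≥0∞) (_ : 0 < δ), Vdelta e causal tau ω N δ A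

/-- `W^N_δ`. -/
def Wdelta (e : Y → Y → ℝ≥0∞) (causal : Y → Y → Prop) (tau : Y → Y → ℝ≥0∞)
    (ω N : ℝ) (δ : ℝ≥0∞) (A : Set Y) : ℝ≥0∞ :=
  ⨅ (c : ℕ → Option (Y × Y)) (_ : ∀ i, ∀ ab ∈ c i, causal ab.1 ab.2)
    (_ : ∀ i, ∀ ab ∈ c i, e ab.1 ab.2 < δ)
    (_ : A ⊆ ⋃ i, optDiamond causal (c i)),
    ∑' i, optWeight tau ω N (c i)

/-- `W^N`. -/
def Wmeas (e : Y → Y → ℝ≥0∞) (causal : Y → Y → Prop) (tau : Y → Y → ℝ≥0∞)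
    (ω N : ℝ) (A : Set Y) : ℝ≥0∞ :=
  ⨆ (δ : ℝ≥0∞) (_ : 0 < δ), Wdelta e causal tau ω N δ A

/-- Witness data for a future-directed causal curve `(α, β)` in a Lorentzian warped
product with warping function `f`: `α'` is the a.e. derivative of the absolutely
continuous `α` (so that `α` is the integral of `α'`), and `v` is an integrable upper
bound for the metric speed of `β`, satisfying the causal inequality
`−α̇² + (f∘α)² v² ≤ 0` a.e. -/
def WPCausalWitness {X : Type*} [MetricSpace X] (f : ℝ → ℝ) (α : ℝ → ℝ) (β : ℝ → X)
    (a b : ℝ) (α' v : ℝ → ℝ) : Prop :=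
  IntervalIntegrable α' MeasureTheory.volume a b ∧
  IntervalIntegrable v MeasureTheory.volume a b ∧
  (∀ t, 0 ≤ v t) ∧
  (∀ t ∈ Set.Icc a b, α t - α a = ∫ u in a..t, α' u) ∧
  (∀ s ∈ Set.Icc a b, ∀ t ∈ Set.Icc a b, s ≤ t → dist (β s) (β t) ≤ ∫ u in s..t, v u) ∧
  (∀ᵐ t ∂MeasureTheory.volume, t ∈ Set.Icc a b → (f (α t) * v t) ^ 2 ≤ α' t ^ 2)

/-- A future-directed causal curve `(α, β)` on `[a,b]` in the warped product `I ×_f X`. -/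
def IsWPCausalCurve {X : Type*} [MetricSpace X] (I : Set ℝ) (f : ℝ → ℝ)
    (α : ℝ → ℝ) (β : ℝ → X) (a b : ℝ) : Prop :=
  a < b ∧ StrictMonoOn α (Set.Icc a b) ∧ (∀ t ∈ Set.Icc a b, α t ∈ I) ∧
  ∃ α' v : ℝ → ℝ, WPCausalWitness f α β a b α' v

/-- The causal relation of the Lorentzian warped product `I ×_f X`:
`p ≤ q` iff `p = q` or there is a future-directed causal curve from `p` to `q`. -/
def WPcausal {X : Type*} [MetricSpace X] (I : Set ℝ) (f : ℝ → ℝ) (p q : ℝ × X) : Prop :=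
  p = q ∨ ∃ α : ℝ → ℝ, ∃ β : ℝ → X, ∃ a b : ℝ, IsWPCausalCurve I f α β a b ∧
    α a = p.1 ∧ β a = p.2 ∧ α b = q.1 ∧ β b = q.2

/-- A length space: the distance is the infimum of lengths (total variations) of
continuous paths. -/
def IsLengthSpace (X : Type*) [MetricSpace X] : Prop :=
  ∀ x y : X, edist x y =
    ⨅ (γ : ℝ → X) (_ : ContinuousOn γ (Set.Icc 0 1)) (_ : γ 0 = x) (_ : γ 1 = y),
      eVariationOn γ (Set.Icc 0 1)

/-- A geodesic space: any two points are joined by an isometric segment. -/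
def IsGeodesicSpace (X : Type*) [MetricSpace X] : Prop :=
  ∀ x y : X, ∃ γ : ℝ → X, γ 0 = x ∧ γ (dist x y) = y ∧
    ∀ s ∈ Set.Icc 0 (dist x y), ∀ t ∈ Set.Icc 0 (dist x y), dist (γ s) (γ t) = |s - t|

/-- The time separation of a Lorentzian warped product: the supremum of the lengths
`∫ √(α̇² − (f∘α)² v²)` of future-directed causal curves from `p` to `q`. -/
def WPtau {X : Type*} [MetricSpace X] (I : Set ℝ) (f : ℝ → ℝ) (p q : ℝ × X) : ℝ≥0∞ :=
  ⨆ (α : ℝ → ℝ) (β : ℝ → X) (a : ℝ) (b : ℝ) (α' : ℝ → ℝ) (v : ℝ → ℝ)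
    (_ : IsWPCausalCurve I f α β a b ∧ WPCausalWitness f α β a b α' v ∧
      α a = p.1 ∧ β a = p.2 ∧ α b = q.1 ∧ β b = q.2),
    ENNReal.ofReal (∫ t in a..b, Real.sqrt (α' t ^ 2 - (f (α t) * v t) ^ 2))


open Metric Filter
open scoped Topology

section AuxGeneric

variable {Y : Type*}

variable {e : Y → Y → ℝ≥0∞} {causal : Y → Y → Prop} {tau : Y → Y → ℝ≥0∞} {ω N : ℝ}
  {δ δ' : ℝ≥0∞} {A B : Set Y}

lemma le_ediamWith {S : Set Y} {p q : Y} (hp : p ∈ S) (hq : q ∈ S) :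
    e p q ≤ ediamWith e S :=
  le_iSup₂_of_le p hp (le_iSup₂_of_le q hq le_rfl)

lemma ediamWith_le {S : Set Y} {c : ℝ≥0∞} (h : ∀ p ∈ S, ∀ q ∈ S, e p q ≤ c) :
    ediamWith e S ≤ c :=
  iSup₂_le fun p hp => iSup₂_le fun q hq => h p hp q hq

lemma ediamWith_empty : ediamWith e (∅ : Set Y) = 0 := by
  simp [ediamWith]

lemma Vdelta_mono (hAB : A ⊆ B) : Vdelta e causal tau ω N δ A ≤ Vdelta e causal tau ω N δ B := by
  refine le_iInf fun c => le_iInf fun h1 => le_iInf fun h2 => le_iInf fun h3 => ?_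
  exact iInf_le_of_le c (iInf_le_of_le h1 (iInf_le_of_le h2 (iInf_le_of_le (hAB.trans h3) le_rfl)))

lemma Wdelta_mono (hAB : A ⊆ B) : Wdelta e causal tau ω N δ A ≤ Wdelta e causal tau ω N δ B := by
  refine le_iInf fun c => le_iInf fun h1 => le_iInf fun h2 => le_iInf fun h3 => ?_
  exact iInf_le_of_le c (iInf_le_of_le h1 (iInf_le_of_le h2 (iInf_le_of_le (hAB.trans h3) le_rfl)))

lemma Vdelta_anti (hδ : δ ≤ δ') : Vdelta e causal tau ω N δ' A ≤ Vdelta e causal tau ω N δ A := by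
  refine le_iInf fun c => le_iInf fun h1 => le_iInf fun h2 => le_iInf fun h3 => ?_
  exact iInf_le_of_le c (iInf_le_of_le h1 (iInf_le_of_le (fun i => lt_of_lt_of_le (h2 i) hδ)
    (iInf_le_of_le h3 le_rfl)))

lemma Vmeas_mono (hAB : A ⊆ B) : Vmeas e causal tau ω N A ≤ Vmeas e causal tau ω N B :=
  iSup₂_le fun δ hδ => le_iSup₂_of_le δ hδ (Vdelta_mono hAB)

lemma Wmeas_mono (hAB : A ⊆ B) : Wmeas e causal tau ω N A ≤ Wmeas e causal tau ω N B :=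
  iSup₂_le fun δ hδ => le_iSup₂_of_le δ hδ (Wdelta_mono hAB)

lemma Vdelta_le_Vmeas (hδ : 0 < δ) : Vdelta e causal tau ω N δ A ≤ Vmeas e causal tau ω N A :=
  le_iSup₂_of_le δ hδ le_rfl

lemma Wdelta_le_Wmeas (hδ : 0 < δ) : Wdelta e causal tau ω N δ A ≤ Wmeas e causal tau ω N A :=
  le_iSup₂_of_le δ hδ le_rfl

lemma Vdelta_empty (hδ : 0 < δ) : Vdelta e causal tau ω N δ (∅ : Set Y) = 0 := by
  refine le_antisymm ?_ zero_le
  refine iInf_le_of_le (fun _ => none) (iInf_le_of_le (fun i ab hab => by simp at hab)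
    (iInf_le_of_le (fun i => by simpa [optDiamond, ediamWith_empty] using hδ)
    (iInf_le_of_le (empty_subset _) ?_)))
  simp [optWeight]

lemma Vmeas_empty : Vmeas e causal tau ω N (∅ : Set Y) = 0 := by
  refine le_antisymm (iSup₂_le fun δ hδ => le_of_eq (Vdelta_empty hδ)) zero_le

/-- Easy direction: `W ≤ V`, since the vertices of a diamond belong to it. -/
lemma Wmeas_le_Vmeas (hrefl : ∀ x, causal x x) :
    Wmeas e causal tau ω N A ≤ Vmeas e causal tau ω N A := by
  refine iSup₂_le fun δ hδ => le_iSup₂_of_le δ hδ ?_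
  refine le_iInf fun c => le_iInf fun h1 => le_iInf fun h2 => le_iInf fun h3 => ?_
  refine iInf_le_of_le c (iInf_le_of_le h1 (iInf_le_of_le ?_ (iInf_le_of_le h3 le_rfl)))
  intro i ab hab
  have hc : causal ab.1 ab.2 := h1 i ab hab
  have hmem : c i = some ab := hab
  have h1' : ab.1 ∈ optDiamond causal (c i) := by
    rw [hmem]; exact ⟨hrefl _, hc⟩
  have h2' : ab.2 ∈ optDiamond causal (c i) := by
    rw [hmem]; exact ⟨hc, hrefl _⟩
  exact lt_of_le_of_lt (le_ediamWith h1' h2') (h2 i)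

/-- Countable subadditivity of `Vmeas`. -/
lemma Vmeas_iUnion_le (E : ℕ → Set Y) :
    Vmeas e causal tau ω N (⋃ n, E n) ≤ ∑' n, Vmeas e causal tau ω N (E n) := by
  refine iSup₂_le fun δ hδ => ?_
  set S := ∑' n, Vmeas e causal tau ω N (E n) with hS
  rcases eq_or_ne S ⊤ with h | h
  · rw [h]; exact le_top
  refine ENNReal.le_of_forall_pos_le_add fun ε hε hS' => ?_
  have hfin : ∀ n, Vdelta e causal tau ω N δ (E n) ≠ ⊤ := fun n =>
    ne_top_of_le_ne_top h (le_trans (Vdelta_le_Vmeas hδ) (ENNReal.le_tsum n))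
  have hchoice : ∀ n : ℕ, ∃ c : ℕ → Option (Y × Y),
      (∀ i, ∀ ab ∈ c i, causal ab.1 ab.2) ∧
      (∀ i, ediamWith e (optDiamond causal (c i)) < δ) ∧
      (E n ⊆ ⋃ i, optDiamond causal (c i)) ∧
      ∑' i, optWeight tau ω N (c i) ≤ Vdelta e causal tau ω N δ (E n) + ε / 2 / 2 ^ n := by
    intro n
    have hlt : Vdelta e causal tau ω N δ (E n) <
        Vdelta e causal tau ω N δ (E n) + ε / 2 / 2 ^ n := by
      refine ENNReal.lt_add_right (hfin n) ?_
      simp [ENNReal.div_eq_zero_iff, ENNReal.pow_eq_top_iff, (ENNReal.coe_pos.2 hε).ne']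
    conv_lhs at hlt => rw [Vdelta]
    simp only [iInf_lt_iff] at hlt
    obtain ⟨c, h1, h2, h3, h4⟩ := hlt
    exact ⟨c, h1, h2, h3, h4.le⟩
  choose c hc1 hc2 hc3 hc4 using hchoice
  let π : ℕ ≃ ℕ × ℕ := (Denumerable.eqv (ℕ × ℕ)).symm
  let C : ℕ → Option (Y × Y) := fun i => c (π i).1 (π i).2
  have hcover : (⋃ n, E n) ⊆ ⋃ i, optDiamond causal (C i) := by
    intro x hx
    obtain ⟨n, hn⟩ := mem_iUnion.1 hx
    obtain ⟨i, hi⟩ := mem_iUnion.1 (hc3 n hn)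
    refine mem_iUnion.2 ⟨π.symm (n, i), ?_⟩
    simpa [C, Equiv.apply_symm_apply] using hi
  have hsum : ∑' i, optWeight tau ω N (C i) ≤ S + ε := by
    have h1 : ∑' i, optWeight tau ω N (C i)
        = ∑' nm : ℕ × ℕ, optWeight tau ω N (c nm.1 nm.2) := by
      simpa [C] using π.tsum_eq (fun nm : ℕ × ℕ => optWeight tau ω N (c nm.1 nm.2))
    have h2 : ∑' nm : ℕ × ℕ, optWeight tau ω N (c nm.1 nm.2)
        = ∑' (n : ℕ) (i : ℕ), optWeight tau ω N (c n i) :=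
      ENNReal.tsum_prod (f := fun a b => optWeight tau ω N (c a b))
    rw [h1, h2]
    calc ∑' (n : ℕ) (i : ℕ), optWeight tau ω N (c n i)
        ≤ ∑' n : ℕ, (Vdelta e causal tau ω N δ (E n) + ε / 2 / 2 ^ n) :=
          ENNReal.tsum_le_tsum fun n => hc4 n
      _ ≤ ∑' n : ℕ, (Vmeas e causal tau ω N (E n) + ε / 2 / 2 ^ n) :=
          ENNReal.tsum_le_tsum fun n => add_le_add_left (Vdelta_le_Vmeas hδ) _
      _ = S + ∑' n : ℕ, (ε : ℝ≥0∞) / 2 / 2 ^ n := by rw [ENNReal.tsum_add]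
      _ ≤ S + ε := by
          refine add_le_add_right ?_ S
          have hg : ∑' n : ℕ, (ε : ℝ≥0∞) / 2 / 2 ^ n = ε := by
            have e1 : ∀ n : ℕ, (ε : ℝ≥0∞) / 2 / 2 ^ n = (ε / 2) * (2 : ℝ≥0∞)⁻¹ ^ n := by
              intro n
              rw [div_eq_mul_inv ((ε : ℝ≥0∞)/2), ← ENNReal.inv_pow]
            rw [tsum_congr e1, ENNReal.tsum_mul_left, ENNReal.tsum_geometric,
              ENNReal.one_sub_inv_two, inv_inv]
            exact ENNReal.div_mul_cancel two_ne_zero ENNReal.ofNat_ne_top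
          exact le_of_eq hg
  refine le_trans ?_ hsum
  exact iInf_le_of_le C (iInf_le_of_le (fun i => hc1 _ _) (iInf_le_of_le (fun i => hc2 _ _)
    (iInf_le_of_le hcover le_rfl)))

lemma Vdelta_add_le_of_sep {E F : Set Y} {ε : ℝ≥0∞} (hδ : 0 < δ) (hδε : δ ≤ ε)
    (hsep : ∀ p ∈ E, ∀ q ∈ F, ε ≤ e p q) :
    Vdelta e causal tau ω N δ E + Vdelta e causal tau ω N δ F
      ≤ Vdelta e causal tau ω N δ (E ∪ F) := by
  classical
  refine le_iInf fun c => le_iInf fun h1 => le_iInf fun h2 => le_iInf fun h3 => ?_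
  set cE : ℕ → Option (Y × Y) :=
    fun i => if (optDiamond causal (c i) ∩ E).Nonempty then c i else none with hcE
  set cF : ℕ → Option (Y × Y) :=
    fun i => if (optDiamond causal (c i) ∩ F).Nonempty then c i else none with hcF
  have hsplit : ∀ (G : Set Y) (cG : ℕ → Option (Y × Y)),
      (cG = fun i => if (optDiamond causal (c i) ∩ G).Nonempty then c i else none) →
      G ⊆ E ∪ F →
      Vdelta e causal tau ω N δ G ≤ ∑' i, optWeight tau ω N (cG i) := by
    intro G cG hdef hG
    refine iInf_le_of_le cG (iInf_le_of_le ?_ (iInf_le_of_le ?_ (iInf_le_of_le ?_ le_rfl)))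
    · intro i ab hab
      simp only [hdef] at hab
      by_cases hne : (optDiamond causal (c i) ∩ G).Nonempty
      · rw [if_pos hne] at hab; exact h1 i ab hab
      · rw [if_neg hne] at hab; exact absurd hab (by simp)
    · intro i
      simp only [hdef]
      by_cases hne : (optDiamond causal (c i) ∩ G).Nonempty
      · rw [if_pos hne]; exact h2 i
      · rw [if_neg hne]
        simpa [optDiamond, ediamWith_empty] using hδ
    · intro x hx
      obtain ⟨i, hi⟩ := mem_iUnion.1 (h3 (hG hx))
      refine mem_iUnion.2 ⟨i, ?_⟩
      simp only [hdef]
      rw [if_pos ⟨x, hi, hx⟩]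
      exact hi
  have hptwise : ∀ i, optWeight tau ω N (cE i) + optWeight tau ω N (cF i)
      ≤ optWeight tau ω N (c i) := by
    intro i
    by_cases hE : (optDiamond causal (c i) ∩ E).Nonempty
    · by_cases hF : (optDiamond causal (c i) ∩ F).Nonempty
      · exfalso
        obtain ⟨p, hpD, hpE⟩ := hE
        obtain ⟨q, hqD, hqF⟩ := hF
        have : ε ≤ e p q := hsep p hpE q hqF
        have h4 : e p q ≤ ediamWith e (optDiamond causal (c i)) := le_ediamWith hpD hqD
        exact absurd (lt_of_le_of_lt (this.trans h4) (lt_of_lt_of_le (h2 i) hδε))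
          (lt_irrefl _)
      · simp only [hcE, hcF, if_pos hE, if_neg hF]
        simp [optWeight]
    · simp only [hcE, if_neg hE]
      simp only [optWeight, zero_add]
      by_cases hF : (optDiamond causal (c i) ∩ F).Nonempty
      · simp only [hcF, if_pos hF]; exact le_rfl
      · simp only [hcF, if_neg hF]; simp [optWeight]
  calc Vdelta e causal tau ω N δ E + Vdelta e causal tau ω N δ F
      ≤ (∑' i, optWeight tau ω N (cE i)) + ∑' i, optWeight tau ω N (cF i) :=
        add_le_add (hsplit E cE hcE subset_union_left) (hsplit F cF hcF subset_union_right)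
    _ = ∑' i, (optWeight tau ω N (cE i) + optWeight tau ω N (cF i)) :=
        (ENNReal.tsum_add).symm
    _ ≤ ∑' i, optWeight tau ω N (c i) := ENNReal.tsum_le_tsum hptwise

lemma Vmeas_add_le_of_sep {E F : Set Y} {ε : ℝ≥0∞} (hε : 0 < ε)
    (hsep : ∀ p ∈ E, ∀ q ∈ F, ε ≤ e p q) :
    Vmeas e causal tau ω N E + Vmeas e causal tau ω N F ≤ Vmeas e causal tau ω N (E ∪ F) := by
  rw [Vmeas, Vmeas]
  refine ENNReal.biSup_add_biSup_le' (p := fun δ : ℝ≥0∞ => 0 < δ)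
    (q := fun δ : ℝ≥0∞ => 0 < δ) ⟨1, one_pos⟩ ⟨1, one_pos⟩ ?_
  intro δ₁ h₁ δ₂ h₂
  set δ := min δ₁ (min δ₂ ε) with hδdef
  have hδ : 0 < δ := lt_min h₁ (lt_min h₂ hε)
  calc Vdelta e causal tau ω N δ₁ E + Vdelta e causal tau ω N δ₂ F
      ≤ Vdelta e causal tau ω N δ E + Vdelta e causal tau ω N δ F :=
        add_le_add (Vdelta_anti (min_le_left _ _))
          (Vdelta_anti ((min_le_right _ _).trans (min_le_left _ _)))
    _ ≤ Vdelta e causal tau ω N δ (E ∪ F) :=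
        Vdelta_add_le_of_sep hδ ((min_le_right _ _).trans (min_le_right _ _)) hsep
    _ ≤ Vmeas e causal tau ω N (E ∪ F) := Vdelta_le_Vmeas hδ


end AuxGeneric

section AuxReal

/-- If all subinterval integrals of `g` are nonnegative, then `g ≥ 0` a.e. on `[a,b]`. -/
lemma ae_nonneg_of_intervals {a b : ℝ} {g : ℝ → ℝ}
    (hab : a ≤ b) (hint : IntervalIntegrable g volume a b)
    (h0 : ∀ s t : ℝ, a ≤ s → s ≤ t → t ≤ b → 0 ≤ ∫ u in s..t, g u) :
    0 ≤ᵐ[volume.restrict (Icc a b)] g := by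
  set φ : ℝ → ℝ := (Icc a b).indicator g with hφdef
  have hgI : IntegrableOn g (Icc a b) volume :=
    (intervalIntegrable_iff_integrableOn_Icc_of_le hab).1 hint
  have hφint : Integrable φ volume := hgI.integrable_indicator measurableSet_Icc
  have hLeb := IsUnifLocDoublingMeasure.ae_tendsto_average (volume : Measure ℝ)
    hφint.locallyIntegrable 1
  have key : ∀ᵐ x ∂volume, x ∈ Ioo a b → 0 ≤ g x := by
    filter_upwards [hLeb] with x hx hxI
    have htend : Tendsto (fun r : ℝ => ⨍ y in closedBall x r, φ y) (𝓝[>] 0) (𝓝 (φ x)) := by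
      refine hx (fun _ => x) (fun r => r) tendsto_id ?_
      filter_upwards [self_mem_nhdsWithin] with r (hr : r ∈ Ioi (0:ℝ))
      exact mem_closedBall_self (by simpa using hr.le)
    have hev : ∀ᶠ r in 𝓝[>] (0:ℝ), 0 ≤ ⨍ y in closedBall x r, φ y := by
      have hmem : Ioo (0:ℝ) (min (x - a) (b - x)) ∈ 𝓝[>] (0:ℝ) :=
        Ioo_mem_nhdsGT_of_mem ⟨le_refl _, by
          simp only [lt_min_iff]; exact ⟨by linarith [hxI.1], by linarith [hxI.2]⟩⟩
      filter_upwards [hmem] with r hr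
      have hsub : closedBall x r ⊆ Icc a b := by
        rw [Real.closedBall_eq_Icc]
        apply Icc_subset_Icc
        · have := hr.2; have := lt_min_iff.1 this; linarith [this.1]
        · have := lt_min_iff.1 hr.2; linarith [this.2]
      have hcalc : ∫ y in closedBall x r, φ y = ∫ u in (x-r)..(x+r), g u := by
        rw [hφdef, setIntegral_indicator measurableSet_Icc,
          inter_eq_self_of_subset_left hsub, Real.closedBall_eq_Icc,
          integral_Icc_eq_integral_Ioc, intervalIntegral.integral_of_le (by linarith [hr.1])]
      have hnn : 0 ≤ ∫ y in closedBall x r, φ y := by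
        rw [hcalc]
        refine h0 _ _ ?_ (by linarith [hr.1]) ?_
        · have := lt_min_iff.1 hr.2; linarith [this.1]
        · have := lt_min_iff.1 hr.2; linarith [this.2]
      rw [setAverage_eq]
      exact smul_nonneg (by positivity) hnn
    have : 0 ≤ φ x := ge_of_tendsto htend hev
    rwa [hφdef, indicator_of_mem (Ioo_subset_Icc_self hxI)] at this
  have hIoo : ∀ᵐ x ∂volume, x ∈ Icc a b → x ∈ Ioo a b ∨ x ∈ ({a, b} : Set ℝ) := by
    refine Eventually.of_forall fun x hx => ?_
    rcases eq_or_lt_of_le hx.1 with h | h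
    · exact Or.inr (by simp [← h])
    rcases eq_or_lt_of_le hx.2 with h' | h'
    · exact Or.inr (by simp [h'])
    exact Or.inl ⟨h, h'⟩
  have hnull : ∀ᵐ x ∂volume, x ∉ ({a, b} : Set ℝ) := by
    have : volume ({a, b} : Set ℝ) = 0 :=
      (Set.toFinite ({a,b} : Set ℝ)).measure_zero volume
    exact measure_eq_zero_iff_ae_notMem.1 this
  rw [EventuallyLE, ae_restrict_iff' measurableSet_Icc]
  filter_upwards [key, hIoo, hnull] with x h1 h2 h3 hx
  rcases h2 hx with h | h
  · exact h1 h
  · exact absurd h h3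


end AuxReal

section AuxWP

variable {X : Type*} [MetricSpace X] {I : Set ℝ} {f : ℝ → ℝ}

lemma wp_fst_le {p q : ℝ × X} (h : WPcausal I f p q) : p.1 ≤ q.1 := by
  rcases h with h | ⟨α, β, a, b, ⟨hab, hmono, _, _⟩, ha1, _, hb1, _⟩
  · rw [h]
  · rw [← ha1, ← hb1]
    exact (hmono (left_mem_Icc.2 hab.le) (right_mem_Icc.2 hab.le) hab).le

lemma wp_eq_of_fst_eq {p q : ℝ × X} (h : WPcausal I f p q) (h1 : q.1 ≤ p.1) : p = q := by
  rcases h with h | ⟨α, β, a, b, ⟨hab, hmono, _, _⟩, ha1, _, hb1, _⟩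
  · exact h
  · exfalso
    have := hmono (left_mem_Icc.2 hab.le) (right_mem_Icc.2 hab.le) hab
    rw [ha1, hb1] at this; exact absurd h1 (not_le.2 this)

/-- Core estimate: the spatial distance between causally related points is controlled by the
time difference divided by a lower bound of `f` on the relevant time interval. -/
lemma wp_dist_bound {p q : ℝ × X} (h : WPcausal I f p q) {m : ℝ} (hm : 0 < m)
    (hmf : ∀ t ∈ Icc p.1 q.1, m ≤ f t) :
    dist p.2 q.2 ≤ (q.1 - p.1) / m := by
  rcases h with h | ⟨α, β, a, b, ⟨hab, hmono, hIα, α', v, hα'int, hvint, hv0, hFTC, hβ, hineq⟩,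
    ha1, ha2, hb1, hb2⟩
  · rw [h]; simp
  have habl : a ≤ b := hab.le
  have hmOn := hmono.monotoneOn
  have hrange : ∀ t ∈ Icc a b, α t ∈ Icc p.1 q.1 := by
    intro t ht
    rw [← ha1, ← hb1]
    exact ⟨hmOn (left_mem_Icc.2 habl) ht ht.1, hmOn ht (right_mem_Icc.2 habl) ht.2⟩
  -- subinterval integrals of α' are nonnegative
  have hsub : ∀ s t : ℝ, a ≤ s → s ≤ t → t ≤ b → 0 ≤ ∫ u in s..t, α' u := by
    intro s t hs hst htb
    have hs' : s ∈ Icc a b := ⟨hs, hst.trans htb⟩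
    have ht' : t ∈ Icc a b := ⟨hs.trans hst, htb⟩
    have hias : IntervalIntegrable α' volume a s :=
      hα'int.mono_set (uIcc_subset_uIcc (by simp [habl]) (by rw [uIcc_of_le habl]; exact hs'))
    have hiat : IntervalIntegrable α' volume a t :=
      hα'int.mono_set (uIcc_subset_uIcc (by simp [habl]) (by rw [uIcc_of_le habl]; exact ht'))
    have := intervalIntegral.integral_interval_sub_left hiat hias
    rw [← this, ← hFTC t ht', ← hFTC s hs']
    have := hmOn hs' ht' hst
    linarith
  have hnn : 0 ≤ᵐ[volume.restrict (Icc a b)] α' := ae_nonneg_of_intervals habl hα'int hsub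
  -- pointwise a.e. bound m * v ≤ α'
  have hmv : (fun t => m * v t) ≤ᵐ[volume.restrict (Icc a b)] α' := by
    rw [EventuallyLE]
    filter_upwards [hnn, ae_restrict_of_ae hineq, ae_restrict_mem measurableSet_Icc]
      with t h1 h2 h3
    have hfv : f (α t) * v t ≤ |α' t| := by
      have h4 : |f (α t) * v t| ≤ |α' t| := by
        rw [← Real.sqrt_sq_eq_abs, ← Real.sqrt_sq_eq_abs]
        exact Real.sqrt_le_sqrt (h2 h3)
      exact (le_abs_self _).trans h4
    have : m * v t ≤ f (α t) * v t :=
      mul_le_mul_of_nonneg_right (hmf _ (hrange t h3)) (hv0 t)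
    calc m * v t ≤ |α' t| := this.trans hfv
    _ = α' t := abs_of_nonneg h1
  have hintmv : IntervalIntegrable (fun t => m * v t) volume a b := hvint.const_mul m
  have hIle : ∫ t in a..b, m * v t ≤ ∫ t in a..b, α' t :=
    intervalIntegral.integral_mono_ae_restrict habl hintmv hα'int hmv
  have hαint : ∫ t in a..b, α' t = q.1 - p.1 := by
    have := hFTC b (right_mem_Icc.2 habl)
    rw [ha1, hb1] at this; linarith
  have hdb : dist p.2 q.2 ≤ ∫ t in a..b, v t := by
    rw [← ha2, ← hb2]
    exact hβ a (left_mem_Icc.2 habl) b (right_mem_Icc.2 habl) habl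
  have hmul : ∫ t in a..b, m * v t = m * ∫ t in a..b, v t :=
    intervalIntegral.integral_const_mul m v
  rw [le_div_iff₀ hm, mul_comm]
  calc m * dist p.2 q.2 ≤ m * ∫ t in a..b, v t := by
        exact mul_le_mul_of_nonneg_left hdb hm.le
  _ ≤ q.1 - p.1 := by rw [← hmul, ← hαint] at *; exact hIle


/-- Diameter bound for causal diamonds in terms of the time separation of the vertices. -/
lemma wp_diam_bound {p q : ℝ × X} (hc : WPcausal I f p q) {m : ℝ} (hm : 0 < m)
    (hmf : ∀ t ∈ Icc p.1 q.1, m ≤ f t) :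
    ediamWith (fun a b : ℝ × X => edist a b) (cdiam (WPcausal I f) p q)
      ≤ ENNReal.ofReal ((q.1 - p.1) * max 1 (2 / m)) := by
  have hD : 0 ≤ q.1 - p.1 := sub_nonneg.2 (wp_fst_le hc)
  refine ediamWith_le fun z hz w hw => ?_
  obtain ⟨hpz, hzq⟩ := hz
  obtain ⟨hpw, hwq⟩ := hw
  have hz1 : p.1 ≤ z.1 := wp_fst_le hpz
  have hz2 : z.1 ≤ q.1 := wp_fst_le hzq
  have hw1 : p.1 ≤ w.1 := wp_fst_le hpw
  have hw2 : w.1 ≤ q.1 := wp_fst_le hwq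
  have hdz : dist p.2 z.2 ≤ (z.1 - p.1) / m :=
    wp_dist_bound hpz hm fun t ht => hmf t ⟨ht.1, ht.2.trans hz2⟩
  have hdw : dist p.2 w.2 ≤ (w.1 - p.1) / m :=
    wp_dist_bound hpw hm fun t ht => hmf t ⟨ht.1, ht.2.trans hw2⟩
  rw [edist_dist]
  apply ENNReal.ofReal_le_ofReal
  rw [Prod.dist_eq]
  refine max_le ?_ ?_
  · rw [Real.dist_eq]
    calc |z.1 - w.1| ≤ q.1 - p.1 := abs_le.2 ⟨by linarith, by linarith⟩
    _ ≤ (q.1 - p.1) * max 1 (2 / m) := le_mul_of_one_le_right hD (le_max_left _ _)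
  · calc dist z.2 w.2 ≤ dist z.2 p.2 + dist p.2 w.2 := dist_triangle _ _ _
    _ = dist p.2 z.2 + dist p.2 w.2 := by rw [dist_comm z.2 p.2]
    _ ≤ (z.1 - p.1) / m + (w.1 - p.1) / m := add_le_add hdz hdw
    _ ≤ (q.1 - p.1) / m + (q.1 - p.1) / m := by
        gcongr
    _ = (q.1 - p.1) * (2 / m) := by ring
    _ ≤ (q.1 - p.1) * max 1 (2 / m) := by
        exact mul_le_mul_of_nonneg_left (le_max_right _ _) hD

variable {ω N : ℝ}

/-- Key step: `V ≤ W` for sets whose time projection is boundedly inside `I`. -/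
lemma wp_V_le_W_timeThick (hf : ContinuousOn f I) (hfpos : ∀ t ∈ I, 0 < f t)
    {A' : Set (ℝ × X)} {r R : ℝ} (hr : 0 < r)
    (hA'I : ∀ p ∈ A', Icc (p.1 - 2 * r) (p.1 + 2 * r) ⊆ I)
    (hA'bd : ∀ p ∈ A', |p.1| ≤ R) :
    Vmeas (fun a b : ℝ × X => edist a b) (WPcausal I f) (WPtau I f) ω N A'
      ≤ Wmeas (fun a b : ℝ × X => edist a b) (WPcausal I f) (WPtau I f) ω N A' := by
  classical
  rcases A'.eq_empty_or_nonempty with rfl | hne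
  · rw [Vmeas_empty]; exact zero_le
  set C : Set ℝ := closure (Prod.fst '' A') with hCdef
  have hCne : C.Nonempty := (hne.image Prod.fst).closure
  have hCcp : IsCompact C := by
    refine Metric.isCompact_of_isClosed_isBounded isClosed_closure ?_
    refine (Metric.isBounded_Icc (-R) R).subset (closure_minimal ?_ isClosed_Icc)
    rintro t ⟨p, hp, rfl⟩
    exact abs_le.1 (hA'bd p hp)
  set K : Set ℝ := {t | ∃ cc ∈ C, |t - cc| ≤ r} with hKdef
  have hKI : K ⊆ I := by
    rintro t ⟨cc, hcc, htc⟩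
    obtain ⟨u, hu, hdu⟩ := Metric.mem_closure_iff.1 hcc r hr
    obtain ⟨p, hp, rfl⟩ := hu
    have h1 : |cc - p.1| < r := by rwa [Real.dist_eq] at hdu
    have h2 := abs_le.1 htc
    have h3 := abs_lt.1 h1
    exact hA'I p hp ⟨by linarith [h2.1, h3.1], by linarith [h2.2, h3.2]⟩
  have hKcp : IsCompact K := by
    have hEq : K = (fun x : ℝ × ℝ => x.1 + x.2) '' (C ×ˢ Icc (-r) r) := by
      ext t
      constructor
      · rintro ⟨cc, hcc, htc⟩
        refine ⟨(cc, t - cc), ⟨hcc, ?_⟩, by simp⟩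
        have h := abs_le.1 htc
        exact mem_Icc.2 ⟨h.1, h.2⟩
      · rintro ⟨⟨cc, u⟩, ⟨hcc, hu⟩, rfl⟩
        exact ⟨cc, hcc, by simpa using abs_le.2 hu⟩
    rw [hEq]
    exact (hCcp.prod isCompact_Icc).image (continuous_fst.add continuous_snd)
  have hKne : K.Nonempty := hCne.imp fun cc hc => ⟨cc, hc, by simp [hr.le]⟩
  obtain ⟨x₀, hx₀K, hx₀min⟩ := hKcp.exists_isMinOn hKne (hf.mono hKI)
  set m := f x₀ with hmdef
  have hm : 0 < m := hfpos x₀ (hKI hx₀K)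
  set Cst := max 1 (2 / m) with hCstdef
  have hCst : (0:ℝ) < Cst := lt_of_lt_of_le one_pos (le_max_left _ _)
  refine iSup₂_le fun δ hδ => ?_
  set δ' := min δ 1 with hδ'def
  have hδ'pos : 0 < δ' := lt_min hδ one_pos
  have hδ'top : δ' ≠ ⊤ := ((min_le_right δ 1).trans_lt ENNReal.one_lt_top).ne
  set s := min r (δ'.toReal / (2 * Cst)) with hsdef
  have hs : 0 < s :=
    lt_min hr (div_pos (ENNReal.toReal_pos hδ'pos.ne' hδ'top) (by positivity))
  have hkey : ENNReal.ofReal (s * Cst) < δ := by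
    have h1 : s * Cst ≤ δ'.toReal / 2 := by
      calc s * Cst ≤ δ'.toReal / (2 * Cst) * Cst :=
            mul_le_mul_of_nonneg_right (min_le_right _ _) hCst.le
      _ = δ'.toReal / 2 := by field_simp
    have htr : 0 < δ'.toReal := ENNReal.toReal_pos hδ'pos.ne' hδ'top
    calc ENNReal.ofReal (s * Cst) ≤ ENNReal.ofReal (δ'.toReal / 2) :=
          ENNReal.ofReal_le_ofReal h1
    _ < ENNReal.ofReal δ'.toReal := (ENNReal.ofReal_lt_ofReal_iff htr).2 (by linarith)
    _ = δ' := ENNReal.ofReal_toReal hδ'top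
    _ ≤ δ := min_le_left _ _
  have hsW : (0:ℝ≥0∞) < ENNReal.ofReal s := ENNReal.ofReal_pos.2 hs
  refine le_trans ?_ (Wdelta_le_Wmeas hsW)
  refine le_iInf fun c => le_iInf fun h1 => le_iInf fun h2 => le_iInf fun h3 => ?_
  set c' : ℕ → Option ((ℝ × X) × (ℝ × X)) := fun i =>
    if (optDiamond (WPcausal I f) (c i) ∩ A').Nonempty then c i else none with hc'def
  have hVle : Vdelta (fun a b : ℝ × X => edist a b) (WPcausal I f) (WPtau I f) ω N δ A'
      ≤ ∑' i, optWeight (WPtau I f) ω N (c' i) := by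
    refine iInf_le_of_le c' (iInf_le_of_le ?_ (iInf_le_of_le ?_ (iInf_le_of_le ?_ le_rfl)))
    · intro i ab hab
      simp only [hc'def] at hab
      by_cases hne' : (optDiamond (WPcausal I f) (c i) ∩ A').Nonempty
      · rw [if_pos hne'] at hab; exact h1 i ab hab
      · rw [if_neg hne'] at hab; exact absurd hab (by simp)
    · intro i
      simp only [hc'def]
      by_cases hne' : (optDiamond (WPcausal I f) (c i) ∩ A').Nonempty
      · rw [if_pos hne']
        obtain ⟨z, hzD, hzA⟩ := hne'
        cases hci : c i with
        | none =>
          simpa [optDiamond, ediamWith_empty] using hδ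
        | some ab =>
          have hmem : ab ∈ c i := by rw [hci]; rfl
          have hca : WPcausal I f ab.1 ab.2 := h1 i ab hmem
          rw [hci] at hzD
          obtain ⟨hz1, hz2⟩ := hzD
          have ht1 : ab.1.1 ≤ z.1 := wp_fst_le hz1
          have ht2 : z.1 ≤ ab.2.1 := wp_fst_le hz2
          have hes : edist ab.1 ab.2 < ENNReal.ofReal s := h2 i ab hmem
          have hds : dist ab.1 ab.2 < s := by
            rw [edist_dist] at hes
            exact (ENNReal.ofReal_lt_ofReal_iff_of_nonneg dist_nonneg).1 hes
          have hDs : ab.2.1 - ab.1.1 < s := by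
            have hle : dist ab.1.1 ab.2.1 ≤ dist ab.1 ab.2 := by
              rw [Prod.dist_eq]; exact le_max_left _ _
            rw [Real.dist_eq] at hle
            have : ab.2.1 - ab.1.1 ≤ |ab.1.1 - ab.2.1| := by
              rw [abs_sub_comm]; exact le_abs_self _
            linarith
          have hz1C : z.1 ∈ C := subset_closure ⟨z, hzA, rfl⟩
          have hsr : s ≤ r := min_le_left _ _
          have hmf : ∀ t ∈ Icc ab.1.1 ab.2.1, m ≤ f t := by
            intro t ht
            have htK : t ∈ K := ⟨z.1, hz1C, abs_le.2 ⟨by linarith [ht.1], by linarith [ht.2]⟩⟩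
            exact isMinOn_iff.1 hx₀min t htK
          calc ediamWith (fun a b : ℝ × X => edist a b)
                (optDiamond (WPcausal I f) (some ab))
              ≤ ENNReal.ofReal ((ab.2.1 - ab.1.1) * Cst) := wp_diam_bound hca hm hmf
          _ ≤ ENNReal.ofReal (s * Cst) :=
              ENNReal.ofReal_le_ofReal (mul_le_mul_of_nonneg_right hDs.le hCst.le)
          _ < δ := hkey
      · rw [if_neg hne']
        simpa [optDiamond, ediamWith_empty] using hδ
    · intro x hx
      obtain ⟨i, hi⟩ := mem_iUnion.1 (h3 hx)
      refine mem_iUnion.2 ⟨i, ?_⟩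
      simp only [hc'def]
      rw [if_pos ⟨x, hi, hx⟩]
      exact hi
  refine hVle.trans (ENNReal.tsum_le_tsum fun i => ?_)
  simp only [hc'def]
  split_ifs
  · exact le_rfl
  · simp [optWeight]

end AuxWP

/-- On a Lorentzian warped product `I ×_f X` over a proper geodesic length space, the
measures `W^N` and `V^N` (with respect to the product metric) coincide. -/
theorem stmt16 {X : Type*} [MetricSpace X] [ProperSpace X]
    (hlen : IsLengthSpace X) (hgeo : IsGeodesicSpace X)
    (I : Set ℝ) (hIopen : IsOpen I) (hIconn : I.OrdConnected)
    (f : ℝ → ℝ) (hf : ContinuousOn f I) (hfpos : ∀ t ∈ I, 0 < f t)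
    (ω N : ℝ) (hω : 0 < ω) (hN : 0 ≤ N)
    (A : Set (ℝ × X)) (hA : A ⊆ I ×ˢ Set.univ) :
    Wmeas (fun a b : ℝ × X => edist a b) (WPcausal I f) (WPtau I f) ω N A =
      Vmeas (fun a b : ℝ × X => edist a b) (WPcausal I f) (WPtau I f) ω N A := by
  classical
  refine le_antisymm (Wmeas_le_Vmeas fun x => Or.inl rfl) ?_
  -- increasing exhaustion of A by "time-thick" pieces
  set An : ℕ → Set (ℝ × X) := fun n =>
    {p ∈ A | |p.1| ≤ (n : ℝ) ∧
      Icc (p.1 - 3 / ((n : ℝ) + 1)) (p.1 + 3 / ((n : ℝ) + 1)) ⊆ I} with hAnDef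
  have hAnsubA : ∀ n, An n ⊆ A := fun n p hp => hp.1
  have hmono : ∀ {n m : ℕ}, n ≤ m → An n ⊆ An m := by
    intro n m hnm p hp
    obtain ⟨hpA, hpb, hpI⟩ := hp
    refine ⟨hpA, hpb.trans (by exact_mod_cast Nat.cast_le.2 hnm), ?_⟩
    refine (Icc_subset_Icc ?_ ?_).trans hpI <;>
    · have h1 : (0:ℝ) < (n:ℝ) + 1 := by positivity
      have h2 : (n:ℝ) + 1 ≤ (m:ℝ) + 1 := by
        have := (Nat.cast_le (α := ℝ)).2 hnm; linarith
      have := div_le_div_of_nonneg_left (by norm_num : (0:ℝ) ≤ 3) h1 h2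
      linarith
  have hU : A ⊆ ⋃ n, An n := by
    intro p hp
    have hpI : p.1 ∈ I := (hA hp).1
    obtain ⟨ε, hε, hball⟩ := Metric.isOpen_iff.1 hIopen p.1 hpI
    obtain ⟨n, hn⟩ := exists_nat_gt (max |p.1| (3 / ε))
    have hn1 : |p.1| < (n:ℝ) := lt_of_le_of_lt (le_max_left _ _) hn
    have hn2 : 3 / ε < (n:ℝ) := lt_of_le_of_lt (le_max_right _ _) hn
    have hεn : 3 / ((n:ℝ) + 1) < ε := by
      have h0 : (0:ℝ) < (n:ℝ) + 1 := by positivity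
      rw [div_lt_iff₀ h0]
      rw [div_lt_iff₀ hε] at hn2
      nlinarith
    refine mem_iUnion.2 ⟨n, hp, hn1.le, fun t ht => hball ?_⟩
    rw [Metric.mem_ball, Real.dist_eq]
    have h0 : (0:ℝ) < (n:ℝ) + 1 := by positivity
    rw [abs_lt]
    constructor <;> [linarith [ht.1]; linarith [ht.2]]
  -- each piece satisfies V ≤ W
  have hAnW : ∀ n, Vmeas (fun a b : ℝ × X => edist a b) (WPcausal I f) (WPtau I f) ω N (An n)
      ≤ Wmeas (fun a b : ℝ × X => edist a b) (WPcausal I f) (WPtau I f) ω N A := by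
    intro n
    have h0 : (0:ℝ) < 1 / ((n:ℝ) + 1) := by positivity
    refine le_trans (wp_V_le_W_timeThick hf hfpos (r := 1 / ((n:ℝ)+1)) (R := (n:ℝ)) h0 ?_ ?_)
      (Wmeas_mono (hAnsubA n))
    · intro p hp
      have h1 : (0:ℝ) < (n:ℝ) + 1 := by positivity
      have h2 : 2 * (1 / ((n:ℝ) + 1)) ≤ 3 / ((n:ℝ) + 1) := by
        rw [mul_one_div]
        gcongr <;> norm_num
      exact (Icc_subset_Icc (by linarith) (by linarith)).trans hp.2.2
    · exact fun p hp => hp.2.1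
  set V : Set (ℝ × X) → ℝ≥0∞ :=
    Vmeas (fun a b : ℝ × X => edist a b) (WPcausal I f) (WPtau I f) ω N with hVdef
  set L := ⨆ n, V (An n) with hLdef
  have hLW : L ≤ Wmeas (fun a b : ℝ × X => edist a b) (WPcausal I f) (WPtau I f) ω N A :=
    iSup_le hAnW
  refine le_trans ?_ hLW
  -- it remains to show Vmeas A ≤ L
  rcases eq_or_ne L ⊤ with hL | hL
  · rw [hL]; exact le_top
  -- separation of An n from A \ An (n+1)
  set εr : ℕ → ℝ := fun n => min 1 (3 / ((n:ℝ) + 1) - 3 / ((n:ℝ) + 2)) with hεrdef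
  have hεrpos : ∀ n, 0 < εr n := by
    intro n
    refine lt_min one_pos (sub_pos.2 ?_)
    have h1 : (0:ℝ) < (n:ℝ) + 1 := by positivity
    exact div_lt_div_of_pos_left (by norm_num) h1 (by linarith)
  have hsep : ∀ n : ℕ, ∀ p ∈ An n, ∀ q ∈ A \ An (n + 1),
      ENNReal.ofReal (εr n) ≤ edist p q := by
    intro n p hp q hq
    obtain ⟨hpA, hpb, hpI⟩ := hp
    obtain ⟨hqA, hqn⟩ := hq
    have hkey : εr n ≤ |p.1 - q.1| := by
      rw [hAnDef] at hqn
      simp only [mem_setOf_eq, mem_sep_iff] at hqn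
      push_neg at hqn
      rcases lt_or_ge ((n:ℝ) + 1) |q.1| with hb | hb
      · have h1 : |q.1| - |p.1| ≤ |q.1 - p.1| := by
          have := abs_sub_abs_le_abs_sub q.1 p.1; linarith
        have h2 : (1:ℝ) ≤ |q.1 - p.1| := by
          have : ((n:ℝ) + 1 : ℝ) = (((n+1 : ℕ)):ℝ) := by push_cast; ring
          linarith [hb, hpb]
        rw [abs_sub_comm]
        exact le_trans (min_le_left _ _) h2
      · have hcast : ((n + 1 : ℕ) : ℝ) + 1 = (n : ℝ) + 2 := by push_cast; ring
        obtain ⟨u, hu, huI⟩ : ∃ u ∈ Icc (q.1 - 3 / ((n:ℝ) + 2)) (q.1 + 3 / ((n:ℝ) + 2)), u ∉ I := by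
          have hq2 : ¬ (Icc (q.1 - 3 / (((n + 1 : ℕ) : ℝ) + 1)) (q.1 + 3 / (((n + 1 : ℕ) : ℝ) + 1)) ⊆ I) :=
            hqn hqA (by push_cast; linarith)
          rw [hcast] at hq2
          exact not_subset.1 hq2
        by_contra hcon
        push_neg at hcon
        apply huI
        apply hpI
        have hd : εr n ≤ 3 / ((n:ℝ) + 1) - 3 / ((n:ℝ) + 2) := min_le_right _ _
        have h4 := abs_lt.1 (lt_of_lt_of_le hcon hd)
        exact ⟨by linarith [hu.1, h4.1, h4.2], by linarith [hu.2, h4.1, h4.2]⟩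
    have hedist : ENNReal.ofReal |p.1 - q.1| ≤ edist p q := by
      rw [Prod.edist_eq]
      refine le_trans ?_ (le_max_left _ _)
      rw [edist_dist, Real.dist_eq]
    exact le_trans (ENNReal.ofReal_le_ofReal hkey) hedist
  set B : ℕ → Set (ℝ × X) := fun n => An (n + 1) \ An n with hBdef
  -- partial sums of the parity classes are bounded by L
  have hBsubAn : ∀ k, B k ⊆ An (k + 1) := fun k p hp => hp.1
  have hBsubCo : ∀ k, B k ⊆ A \ An k := fun k p hp => ⟨hAnsubA _ hp.1, hp.2⟩
  have hpartial : ∀ c : ℕ, ∀ K : ℕ, ∑ k ∈ Finset.range K, V (B (2 * k + c)) ≤ L := by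
    intro c K
    have hind : ∀ K : ℕ, ∑ k ∈ Finset.range K, V (B (2 * k + c))
        ≤ V (⋃ k ∈ Finset.range K, B (2 * k + c)) := by
      intro K
      induction K with
      | zero => simp
      | succ K ih =>
        rw [Finset.sum_range_succ]
        have hstep : V (⋃ k ∈ Finset.range K, B (2 * k + c)) + V (B (2 * K + c))
            ≤ V (⋃ k ∈ Finset.range (K + 1), B (2 * k + c)) := by
          have hsep' : ∀ p ∈ ⋃ k ∈ Finset.range K, B (2 * k + c), ∀ q ∈ B (2 * K + c),
              ENNReal.ofReal (εr (2 * K + c - 1)) ≤ edist p q := by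
            intro p hp q hq
            obtain ⟨k, hk, hpk⟩ := by
              simpa only [Finset.mem_range, mem_iUnion, exists_prop] using hp
            have hK1 : 1 ≤ K := Nat.one_le_iff_ne_zero.2 (by omega)
            have hp' : p ∈ An (2 * K + c - 1) :=
              hmono (by omega) (hBsubAn _ hpk)
            have hq' : q ∈ A \ An (2 * K + c - 1 + 1) := by
              have : 2 * K + c - 1 + 1 = 2 * K + c := by omega
              rw [this]
              exact hBsubCo _ hq
            exact hsep _ p hp' q hq'
          have := Vmeas_add_le_of_sep (e := fun a b : ℝ × X => edist a b)
            (causal := WPcausal I f) (tau := WPtau I f) (ω := ω) (N := N)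
            (ENNReal.ofReal_pos.2 (hεrpos (2 * K + c - 1))) hsep'
          refine le_trans this (le_of_eq ?_)
          congr 1
          rw [Finset.range_add_one, Finset.set_biUnion_insert, union_comm]
        exact le_trans (add_le_add_left ih _) hstep
    refine le_trans (hind K) ?_
    refine le_trans (Vmeas_mono (B := An (2 * K + c)) ?_) ?_
    swap
    · rw [hLdef]; exact le_iSup (fun n => V (An n)) (2 * K + c)
    refine iUnion₂_subset fun k hk => ?_
    rw [Finset.mem_range] at hk
    exact (hBsubAn _).trans (hmono (by omega))
  have hT : ∑' k, V (B k) ≠ ⊤ := by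
    have heo := tsum_even_add_odd (f := fun k => V (B k)) ENNReal.summable ENNReal.summable
    have h1 : ∑' k, V (B (2 * k)) ≤ L :=
      ENNReal.tsum_le_of_sum_range_le fun K => by simpa using hpartial 0 K
    have h2 : ∑' k, V (B (2 * k + 1)) ≤ L :=
      ENNReal.tsum_le_of_sum_range_le fun K => hpartial 1 K
    rw [← heo]
    exact ENNReal.add_ne_top.2 ⟨ne_top_of_le_ne_top hL h1, ne_top_of_le_ne_top hL h2⟩
  have htail := ENNReal.tendsto_sum_nat_add (fun k => V (B k)) hT
  -- for every n, Vmeas A ≤ V (An n) + tail n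
  have hbound : ∀ n : ℕ, V A ≤ L + ∑' k, V (B (k + n)) := by
    intro n
    set E : ℕ → Set (ℝ × X) := fun i => Nat.casesOn i (An n) fun k => B (k + n) with hEdef
    have hcov : A ⊆ ⋃ i, E i := by
      intro p hp
      obtain ⟨m, hm⟩ := mem_iUnion.1 (hU hp)
      have haux : ∀ m : ℕ, p ∈ An m → p ∈ An n ∨ ∃ k, p ∈ B (k + n) := by
        intro m
        induction m with
        | zero => exact fun h => Or.inl (hmono (Nat.zero_le n) h)
        | succ m ih =>
          intro h
          by_cases hpm : p ∈ An m
          · exact ih hpm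
          · rcases le_or_gt (m + 1) n with hc | hc
            · exact Or.inl (hmono hc h)
            · refine Or.inr ⟨m - n, ?_⟩
              have hmn : m - n + n = m := Nat.sub_add_cancel (by omega)
              rw [hBdef]
              simp only [hmn]
              exact ⟨h, hpm⟩
      rcases haux m hm with h | ⟨k, hk⟩
      · exact mem_iUnion.2 ⟨0, h⟩
      · exact mem_iUnion.2 ⟨k + 1, hk⟩
    calc V A ≤ V (⋃ i, E i) := Vmeas_mono hcov
    _ ≤ ∑' i, V (E i) := Vmeas_iUnion_le E
    _ = V (An n) + ∑' k, V (B (k + n)) := by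
        rw [tsum_eq_zero_add' ENNReal.summable]; rfl
    _ ≤ L + ∑' k, V (B (k + n)) := by
        refine add_le_add_left ?_ _
        rw [hLdef]; exact le_iSup (fun n => V (An n)) n
  have htend : Filter.Tendsto (fun n => L + ∑' k, V (B (k + n))) Filter.atTop (nhds (L + 0)) :=
    Filter.Tendsto.const_add L htail
  rw [add_zero] at htend
  exact ge_of_tendsto' htend hbound
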